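/- Let Σ be an alphabet and p : Σ → Σ* a word substitution. Let ψ_p be the ℚ-algebra endomorphism of the polynomial ring ℚ[{x̄_a}_{a∈Σ}] determined by x̄_a ↦ ∏_{i} x̄_{p(a)_i} (the product of the variables of the letters of p(a), with multiplicity). Then ψ_p is injective if and only if p is com-injective. -/

import Mathlib

open MvPolynomial

section Aux

variable {A : Type*} [DecidableEq A]

private lemma list_prod_X (l : List A) :
    (l.map fun b => (X b : MvPolynomial A ℚ)).prod
      = monomial (Multiset.toFinsupp (↑l : Multiset A)) 1 := by
  induction l with
  | nil => simp [monomial_zero']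
  | cons b l ih =>
    rw [List.map_cons, List.prod_cons, ih]
    have hX : (X b : MvPolynomial A ℚ) = monomial (Finsupp.single b 1) 1 := rfl
    rw [hX, monomial_mul, one_mul]
    congr 1
    have : (↑(b :: l) : Multiset A) = {b} + (↑l : Multiset A) := by
      simp
    rw [this, Multiset.toFinsupp_add, Multiset.toFinsupp_singleton]

/-- The induced map on exponents. -/
private noncomputable def gP (p : A → List A) : (A →₀ ℕ) → (A →₀ ℕ) := fun d =>
  Multiset.toFinsupp ((Finsupp.toMultiset d).bind fun a => (↑(p a) : Multiset A))

private lemma smul_singleton_bind (n : ℕ) (a : A) (f : A → Multiset A) :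
    ((n • ({a} : Multiset A)).bind f) = n • f a := by
  induction n with
  | zero => simp
  | succ n ih => rw [succ_nsmul, succ_nsmul, Multiset.add_bind, ih, Multiset.singleton_bind]

private lemma key (p : A → List A) (d : A →₀ ℕ) (c : ℚ) :
    aeval (R := ℚ) (fun a : A => ((p a).map fun b => (X b : MvPolynomial A ℚ)).prod)
      (monomial d c) = monomial (gP p d) c := by
  induction d using Finsupp.induction with
  | zero =>
    rw [monomial_zero', aeval_C]
    simp [gP, monomial_zero']
  | single_add a n d _ _ ih =>
    rw [monomial_single_add, map_mul, map_pow, aeval_X, ih, list_prod_X,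
      monomial_pow, one_pow, monomial_mul, one_mul]
    congr 1
    simp [gP, Finsupp.toMultiset_add, Finsupp.toMultiset_single,
      Multiset.add_bind, Multiset.toFinsupp_add, smul_singleton_bind, map_nsmul]

end Aux

/-- the ℚ-algebra endomorphism ψ_p : x̄_a ↦ ∏ᵢ x̄_{p(a)ᵢ} of
ℚ[{x̄_a}] is injective iff the word substitution p is com-injective. -/
theorem stmt_8 {A : Type*} (p : A → List A) :
    Function.Injective
        (MvPolynomial.aeval (R := ℚ)
          (fun a : A => ((p a).map fun b => (X b : MvPolynomial A ℚ)).prod)) ↔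
      Function.Injective
        (fun m : Multiset A => m.bind fun a => (↑(p a) : Multiset A)) := by
  classical
  constructor
  · intro h m m' hmm'
    have h1 : aeval (R := ℚ) (fun a : A => ((p a).map fun b => (X b : MvPolynomial A ℚ)).prod)
        (monomial (Multiset.toFinsupp m) 1)
        = aeval (R := ℚ) (fun a : A => ((p a).map fun b => (X b : MvPolynomial A ℚ)).prod)
        (monomial (Multiset.toFinsupp m') 1) := by
      rw [key, key]
      simp only [gP, Multiset.toFinsupp_toMultiset]
      rw [show m.bind (fun a => (↑(p a) : Multiset A)) = m'.bind fun a => (↑(p a) : Multiset A)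
        from hmm']
    have h2 := h h1
    rw [monomial_eq_monomial_iff] at h2
    rcases h2 with ⟨h2, -⟩ | ⟨h2, -⟩
    · exact Multiset.toFinsupp.injective h2
    · exact absurd h2 one_ne_zero
  · intro h q q' hqq'
    have hg : Function.Injective (gP p) := by
      intro d d' hdd'
      have h1 := Multiset.toFinsupp.injective hdd'
      have h2 := h h1
      have := congrArg Multiset.toFinsupp h2
      simpa using this
    have hfd : ∀ r : MvPolynomial A ℚ,
        aeval (R := ℚ) (fun a : A => ((p a).map fun b => (X b : MvPolynomial A ℚ)).prod) r
          = AddMonoidAlgebra.mapDomain (gP p) r := by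
      intro r
      induction r using MvPolynomial.induction_on' with
      | monomial d c =>
        rw [key, ← single_eq_monomial d c, AddMonoidAlgebra.mapDomain_single, single_eq_monomial]
      | add f g ihf ihg => rw [map_add, AddMonoidAlgebra.mapDomain_add, ihf, ihg]
    rw [hfd, hfd] at hqq'
    exact AddMonoidAlgebra.mapDomain_injective hg hqq'
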